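/- Let K be a finite index set, a ∈ ℕ, w₁,…,w_a ∈ ℚ^K, and t ∈ ℝ^K. Suppose that for all n₀, n₁ ∈ ℕ^K such that n₀·w_i = n₁·w_i for all i = 1,…,a, we have n₀·t = n₁·t. Then t lies in the real span of {w₁,…,w_a}. -/
import Mathlib


/-- if a real vector `t` has the property that `n₀·t = n₁·t` for all pairs of
natural-number vectors `n₀, n₁` with `n₀·wᵢ = n₁·wᵢ` for every one of finitely many rational
vectors `wᵢ`, then `t` lies in the real span of the `wᵢ`. -/
theorem mem_span_of_dotProduct_nat {K : Type*} [Fintype K] (a : ℕ)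
    (w : Fin a → K → ℚ) (t : K → ℝ)
    (h : ∀ n₀ n₁ : K → ℕ,
      (∀ i : Fin a, ∑ k, (n₀ k : ℚ) * w i k = ∑ k, (n₁ k : ℚ) * w i k) →
      ∑ k, (n₀ k : ℝ) * t k = ∑ k, (n₁ k : ℝ) * t k) :
    t ∈ Submodule.span ℝ (Set.range fun i : Fin a => fun k => ((w i k : ℝ))) := by
  classical
  -- the rational linear map x ↦ (x·wᵢ)ᵢ
  let φ : (K → ℚ) →ₗ[ℚ] (Fin a → ℚ) :=
    { toFun := fun x i => ∑ k, x k * w i k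
      map_add' := by
        intro x y; funext i
        simp [add_mul, Finset.sum_add_distrib]
      map_smul' := by
        intro c x; funext i
        simp [Finset.mul_sum, mul_assoc] }
  -- the rational-linear functional x ↦ x·t (into ℝ as a ℚ-module)
  let T : (K → ℚ) →ₗ[ℚ] ℝ :=
    { toFun := fun x => ∑ k, (x k : ℝ) * t k
      map_add' := by
        intro x y
        simp [add_mul, Finset.sum_add_distrib]
      map_smul' := by
        intro c x
        simp [Finset.mul_sum, mul_assoc, Rat.smul_def] }
  -- key step: T vanishes on the kernel of φ
  have hker : LinearMap.ker φ ≤ LinearMap.ker T := by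
    intro x hx
    have hx' : ∀ i, ∑ k, x k * w i k = 0 := by
      intro i
      have := congrFun (LinearMap.mem_ker.mp hx) i
      simpa [φ] using this
    -- clear denominators
    set d : ℕ := ∏ k, (x k).den with hd
    have hd0 : (d : ℚ) ≠ 0 := by
      rw [hd]
      push_cast
      exact Finset.prod_ne_zero_iff.mpr fun k _ => by
        exact_mod_cast (x k).den_ne_zero
    have hm : ∀ k, ∃ m : ℤ, (m : ℚ) = x k * d := by
      intro k
      refine ⟨(x k).num * ∏ j ∈ Finset.univ.erase k, ((x j).den : ℤ), ?_⟩
      have : (d : ℚ) = ((x k).den : ℚ) * ∏ j ∈ Finset.univ.erase k, ((x j).den : ℚ) := by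
        rw [hd]
        push_cast
        rw [← Finset.mul_prod_erase _ _ (Finset.mem_univ k)]
      rw [this]
      push_cast
      rw [← mul_assoc, Rat.mul_den_eq_num]
    choose m hm using hm
    set n₀ : K → ℕ := fun k => (m k).toNat with hn₀
    set n₁ : K → ℕ := fun k => (-(m k)).toNat with hn₁
    have hsub : ∀ k, (n₀ k : ℚ) - (n₁ k : ℚ) = (m k : ℚ) := by
      intro k
      have := Int.toNat_sub_toNat_neg (m k)
      calc (n₀ k : ℚ) - (n₁ k : ℚ)
          = (((m k).toNat : ℤ) - (((-(m k)).toNat : ℤ)) : ℤ) := by push_cast; ring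
        _ = ((m k : ℤ) : ℚ) := by rw [this]
    have hsubR : ∀ k, (n₀ k : ℝ) - (n₁ k : ℝ) = (m k : ℝ) := by
      intro k
      have := Int.toNat_sub_toNat_neg (m k)
      calc (n₀ k : ℝ) - (n₁ k : ℝ)
          = (((m k).toNat : ℤ) - (((-(m k)).toNat : ℤ)) : ℤ) := by push_cast; ring
        _ = ((m k : ℤ) : ℝ) := by rw [this]
    have hw : ∀ i : Fin a, ∑ k, (n₀ k : ℚ) * w i k = ∑ k, (n₁ k : ℚ) * w i k := by
      intro i
      have : ∑ k, ((n₀ k : ℚ) - (n₁ k : ℚ)) * w i k = 0 := by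
        have : ∑ k, ((n₀ k : ℚ) - (n₁ k : ℚ)) * w i k = ∑ k, (x k * d) * w i k := by
          refine Finset.sum_congr rfl fun k _ => by rw [hsub, hm]
        rw [this]
        have : ∑ k, (x k * d) * w i k = (d : ℚ) * ∑ k, x k * w i k := by
          rw [Finset.mul_sum]; exact Finset.sum_congr rfl fun k _ => by ring
        rw [this, hx' i, mul_zero]
      have h2 : ∑ k, (n₀ k : ℚ) * w i k - ∑ k, (n₁ k : ℚ) * w i k = 0 := by
        rw [← Finset.sum_sub_distrib]
        simpa [sub_mul] using this
      linarith
    have ht := h n₀ n₁ hw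
    -- conclude T x = 0
    have hmR : ∀ k, (m k : ℝ) = (x k : ℝ) * d := by
      intro k
      have := hm k
      exact_mod_cast congrArg (fun q : ℚ => (q : ℝ)) this
    have h3 : ∑ k, ((x k : ℝ) * d) * t k = 0 := by
      have : ∑ k, ((n₀ k : ℝ) - (n₁ k : ℝ)) * t k = 0 := by
        rw [Finset.sum_congr rfl fun k _ => (sub_mul _ _ _), Finset.sum_sub_distrib, ht, sub_self]
      rw [← this]
      exact Finset.sum_congr rfl fun k _ => by rw [hsubR, hmR]
    have hd0R : (d : ℝ) ≠ 0 := by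
      exact_mod_cast hd0
    have h4 : (d : ℝ) * ∑ k, (x k : ℝ) * t k = 0 := by
      rw [Finset.mul_sum, ← h3]
      exact Finset.sum_congr rfl fun k _ => by ring
    have h5 : ∑ k, (x k : ℝ) * t k = 0 := by
      rcases mul_eq_zero.mp h4 with h' | h'
      · exact absurd h' hd0R
      · exact h'
    simpa [T] using h5
  -- factor T through φ
  obtain ⟨g, hg⟩ := LinearMap.exists_extend
    (((LinearMap.ker φ).liftQ T hker).comp (φ.quotKerEquivRange).symm.toLinearMap)
  have hfac : ∀ x, T x = g (φ x) := by
    intro x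
    have hmem : φ x ∈ LinearMap.range φ := LinearMap.mem_range_self φ x
    have := congrFun (congrArg DFunLike.coe hg) ⟨φ x, hmem⟩
    simp only [LinearMap.comp_apply, Submodule.subtype_apply] at this
    rw [this]
    simp only [LinearMap.comp_apply, LinearEquiv.coe_coe]
    have : (φ.quotKerEquivRange).symm ⟨φ x, hmem⟩ = Submodule.Quotient.mk x := by
      apply (φ.quotKerEquivRange).injective
      simp [LinearMap.quotKerEquivRange_apply_mk]
    rw [this]
    rfl
  -- evaluate on standard basis vectors
  set c : Fin a → ℝ := fun i => g (Pi.single i 1) with hc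
  have ht : ∀ k, t k = ∑ i, (w i k : ℝ) * c i := by
    intro k
    have h1 : T (Pi.single k 1) = t k := by
      simp only [T, LinearMap.coe_mk, AddHom.coe_mk]
      rw [Finset.sum_eq_single k]
      · simp
      · intro b _ hb; simp [Pi.single_apply, hb]
      · intro hk; exact absurd (Finset.mem_univ k) hk
    have h2 : φ (Pi.single k 1) = fun i => w i k := by
      funext i
      simp [φ, Pi.single_apply, ite_mul, Finset.sum_ite_eq']
    have h3 := hfac (Pi.single k 1)
    rw [h1, h2] at h3
    rw [h3]
    rw [LinearMap.pi_apply_eq_sum_univ g (fun i => w i k)]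
    refine Finset.sum_congr rfl fun i _ => ?_
    rw [Rat.smul_def]
    congr 1
    congr 1
    funext j
    simp [Pi.single_apply, eq_comm]
  have : t = ∑ i, c i • (fun k => ((w i k : ℝ))) := by
    funext k
    rw [ht k]
    simp [Finset.sum_apply, mul_comm]
  rw [this]
  exact Submodule.sum_mem _ fun i _ =>
    Submodule.smul_mem _ _ (Submodule.subset_span ⟨i, rfl⟩)
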